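/- Let Γ ∈ (1,2], D > 0, m ∈ ℝ^d, and E > √(D² + |m|²). Then the function Φ(p) = |m|²/(E+p) + D·√(1 − |m|²/(E+p)²) + p/(Γ−1) − E is differentiable on [0,∞) and its derivative satisfies Φ'(p) ≥ 1 − |m|²/(E+p)² > 0 for every p ∈ [0,∞); in particular Φ is strictly monotonically increasing on [0,∞). -/

import Mathlib

/-- For Γ ∈ (1,2], D > 0, m ∈ ℝ^d and E > √(D² + ‖m‖²), the
function Φ(p) = ‖m‖²/(E+p) + D√(1 − ‖m‖²/(E+p)²) + p/(Γ−1) − E is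
differentiable on [0,∞), its derivative satisfies
Φ'(p) ≥ 1 − ‖m‖²/(E+p)² > 0 for every p ≥ 0, and Φ is strictly
monotonically increasing on [0,∞). -/
theorem pressure_function_strictly_increasing
    (d : ℕ) (hd : 0 < d) (Γ D E : ℝ) (m : EuclideanSpace ℝ (Fin d))
    (hΓ1 : 1 < Γ) (hΓ2 : Γ ≤ 2) (hD : 0 < D)
    (hE : Real.sqrt (D ^ 2 + ‖m‖ ^ 2) < E)
    (Φ : ℝ → ℝ)
    (hΦ : ∀ p : ℝ, Φ p = ‖m‖ ^ 2 / (E + p) + D * Real.sqrt (1 - ‖m‖ ^ 2 / (E + p) ^ 2)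
        + p / (Γ - 1) - E) :
    DifferentiableOn ℝ Φ (Set.Ici 0) ∧
    (∀ p ∈ Set.Ici (0 : ℝ),
      derivWithin Φ (Set.Ici 0) p ≥ 1 - ‖m‖ ^ 2 / (E + p) ^ 2 ∧
      0 < 1 - ‖m‖ ^ 2 / (E + p) ^ 2) ∧
    StrictMonoOn Φ (Set.Ici 0) := by
  have hΦ' : Φ = fun p => ‖m‖ ^ 2 / (E + p) + D * Real.sqrt (1 - ‖m‖ ^ 2 / (E + p) ^ 2)
      + p / (Γ - 1) - E := funext hΦ
  subst hΦ'
  have hm0 : (0:ℝ) ≤ ‖m‖ := norm_nonneg _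
  have hmE : ‖m‖ < E := by
    have h1 := Real.sqrt_le_sqrt (show ‖m‖ ^ 2 ≤ D ^ 2 + ‖m‖ ^ 2 by nlinarith)
    rw [Real.sqrt_sq hm0] at h1
    linarith
  set M := ‖m‖ ^ 2 with hM
  have hΓ1' : 0 < Γ - 1 := by linarith
  have hginv : (1:ℝ) ≤ 1 / (Γ - 1) := by
    rw [le_div_iff₀ hΓ1']; linarith
  have key : ∀ p : ℝ, 0 ≤ p →
      HasDerivAt (fun q => M / (E + q) + D * Real.sqrt (1 - M / (E + q) ^ 2)
        + q / (Γ - 1) - E)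
      (-M / (E + p) ^ 2 + D * M / ((E + p) ^ 3 * Real.sqrt (1 - M / (E + p) ^ 2))
        + 1 / (Γ - 1)) p := by
    intro p hp
    have hEp : 0 < E + p := by linarith
    have hlt : M < (E + p) ^ 2 := by nlinarith
    have hgpos : 0 < 1 - M / (E + p) ^ 2 := by
      have := (div_lt_one (by positivity : (0:ℝ) < (E + p) ^ 2)).mpr hlt
      linarith
    have hs : 0 < Real.sqrt (1 - M / (E + p) ^ 2) := Real.sqrt_pos.mpr hgpos
    have h1 : HasDerivAt (fun q : ℝ => E + q) 1 p := by
      simpa using (hasDerivAt_id p).const_add E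
    have hA : HasDerivAt (fun q : ℝ => M / (E + q))
        ((0 * (E + p) - M * 1) / (E + p) ^ 2) p :=
      (hasDerivAt_const p M).div h1 hEp.ne'
    have hB1 : HasDerivAt (fun q : ℝ => (E + q) ^ 2)
        (↑2 * (E + p) ^ 1 * 1) p := h1.pow 2
    have hB : HasDerivAt (fun q : ℝ => M / (E + q) ^ 2)
        ((0 * (E + p) ^ 2 - M * (↑2 * (E + p) ^ 1 * 1)) / ((E + p) ^ 2) ^ 2) p :=
      (hasDerivAt_const p M).div hB1 (by positivity)
    have hC : HasDerivAt (fun q : ℝ => 1 - M / (E + q) ^ 2)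
        (-((0 * (E + p) ^ 2 - M * (↑2 * (E + p) ^ 1 * 1)) / ((E + p) ^ 2) ^ 2)) p :=
      hB.const_sub 1
    have hD2 : HasDerivAt (fun q : ℝ => Real.sqrt (1 - M / (E + q) ^ 2))
        (-((0 * (E + p) ^ 2 - M * (↑2 * (E + p) ^ 1 * 1)) / ((E + p) ^ 2) ^ 2)
          / (2 * Real.sqrt (1 - M / (E + p) ^ 2))) p :=
      hC.sqrt hgpos.ne'
    have hF : HasDerivAt (fun q : ℝ => q / (Γ - 1)) (1 / (Γ - 1)) p := by
      simpa using (hasDerivAt_id p).div_const (Γ - 1)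
    have htot := ((hA.add (hD2.const_mul D)).add hF).sub_const E
    set s := Real.sqrt (1 - M / (E + p) ^ 2) with hsdef
    refine htot.congr_deriv ?_
    field_simp
    ring
  refine ⟨fun p hp => ((key p hp).differentiableAt).differentiableWithinAt, ?_, ?_⟩
  · intro p hp
    have hp' : (0:ℝ) ≤ p := hp
    have hEp : 0 < E + p := by linarith
    have hlt : M < (E + p) ^ 2 := by nlinarith
    have hgpos : 0 < 1 - M / (E + p) ^ 2 := by
      have := (div_lt_one (by positivity : (0:ℝ) < (E + p) ^ 2)).mpr hlt
      linarith
    have hdw := ((key p hp').hasDerivWithinAt).derivWithin (uniqueDiffOn_Ici 0 p hp)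
    rw [hdw]
    refine ⟨?_, hgpos⟩
    have hnn : 0 ≤ D * M / ((E + p) ^ 3 * Real.sqrt (1 - M / (E + p) ^ 2)) := by
      have hM0 : (0:ℝ) ≤ M := sq_nonneg _
      have : 0 ≤ Real.sqrt (1 - M / (E + p) ^ 2) := Real.sqrt_nonneg _
      positivity
    linarith [hnn, hginv, neg_div ((E + p) ^ 2) M]
  · apply strictMonoOn_of_deriv_pos (convex_Ici 0)
    · exact fun p hp => ((key p hp).differentiableAt).continuousAt.continuousWithinAt
    · intro x hx
      rw [interior_Ici] at hx
      have hx' : (0:ℝ) ≤ x := le_of_lt hx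
      have hEp : 0 < E + x := by linarith
      have hlt : M < (E + x) ^ 2 := by nlinarith
      have hgpos : 0 < 1 - M / (E + x) ^ 2 := by
        have := (div_lt_one (by positivity : (0:ℝ) < (E + x) ^ 2)).mpr hlt
        linarith
      rw [(key x hx').deriv]
      have hnn : 0 ≤ D * M / ((E + x) ^ 3 * Real.sqrt (1 - M / (E + x) ^ 2)) := by
        have hM0 : (0:ℝ) ≤ M := sq_nonneg _
        positivity
      linarith [hnn, hginv, hgpos, neg_div ((E + x) ^ 2) M]
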